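/- Let f and g be real-valued C¹ functions near points x, y ∈ ℝⁿ with g(y) > f(x), let c = √((f(x) − g(y))² + |x − y|²), and set u = ((f(x) − g(y))∇g(y) + x − y)/c and v = ((g(y) − f(x))∇f(x) + y − x)/c. Suppose α₁, α₂ > 0 are such that |(x − y)·∇g(y)| ≤ α₁ (g(y) − f(x)), |(x − y)·∇f(x)| ≤ α₁ (g(y) − f(x)), and |∇f(x)| + |∇g(y)| ≤ α₂. Then (1 + ∇g(y)·∇f(x)) (1 + u·v) − (u·∇g(y)) (∇f(x)·v) ≥ ((g(y) − f(x))² / c²) · (1 − α₁ (2 + α₂² + α₁)). -/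

import Mathlib

set_option maxHeartbeats 1000000


open scoped RealInnerProductSpace

theorem scalar_key (A np nq Q sq sp a1 a2 : ℝ)
    (hA : 0 < A) (hQ : |Q| ≤ nq * np)
    (h1 : |sq| ≤ a1 * A) (h2 : |sp| ≤ a1 * A)
    (h3 : np + nq ≤ a2) (hnp : 0 ≤ np) (hnq : 0 ≤ nq) (ha1 : 0 < a1) :
    A ^ 2 * (1 - a1 * (2 + a2 ^ 2 + a1)) ≤
      A^2*(1 - Q^2) + A*(1+Q)*(sq+sp) + A^2*np^2*nq^2
        - A*nq^2*sp - A*np^2*sq + sq*sp := by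
  have hQ1 := abs_le.mp hQ
  have h1' := abs_le.mp h1
  have h2' := abs_le.mp h2
  have hQsq : Q^2 ≤ (nq*np)^2 := sq_le_sq' (by linarith [hQ1.1]) hQ1.2
  have hT1 : A^2 ≤ A^2*(1 - Q^2) + A^2*np^2*nq^2 := by
    nlinarith [mul_nonneg (sq_nonneg A) (sub_nonneg.mpr hQsq)]
  have hT2 : -(2*a1*A^2) ≤ A*(sq+sp) := by nlinarith [mul_le_mul_of_nonneg_left (add_le_add h1'.1 h2'.1) hA.le]
  have hT3 : -(a1*a2^2*A^2) ≤ A*Q*(sq+sp) - A*nq^2*sp - A*np^2*sq := by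
    have e1 : A*Q*(sq+sp) - A*nq^2*sp - A*np^2*sq = A*(sp*(Q - nq^2) + sq*(Q - np^2)) := by ring
    have c1 : |Q - nq^2| ≤ np*nq + nq^2 := by
      rw [abs_le]; constructor <;> nlinarith [hQ1.1, hQ1.2]
    have c2 : |Q - np^2| ≤ np*nq + np^2 := by
      rw [abs_le]; constructor <;> nlinarith [hQ1.1, hQ1.2]
    have b1 : |sp * (Q - nq^2)| ≤ (a1*A)*(np*nq + nq^2) := by
      rw [abs_mul]; exact mul_le_mul h2 c1 (abs_nonneg _) (by positivity)
    have b2 : |sq * (Q - np^2)| ≤ (a1*A)*(np*nq + np^2) := by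
      rw [abs_mul]; exact mul_le_mul h1 c2 (abs_nonneg _) (by positivity)
    have b1' := (abs_le.mp b1).1
    have b2' := (abs_le.mp b2).1
    rw [e1]
    have hsum : -(a1*A*((np+nq)^2)) ≤ sp*(Q - nq^2) + sq*(Q - np^2) := by linarith
    have ha2' : (np+nq)^2 ≤ a2^2 := pow_le_pow_left₀ (by positivity) h3 2
    have s1 : A * (-(a1*A*((np+nq)^2))) ≤ A * (sp*(Q - nq^2) + sq*(Q - np^2)) :=
      mul_le_mul_of_nonneg_left hsum hA.le
    have s2 : (a1*A^2) * (np+nq)^2 ≤ (a1*A^2) * a2^2 :=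
      mul_le_mul_of_nonneg_left ha2' (by positivity)
    nlinarith [s1, s2]
  have hT4 : -(a1^2*A^2) ≤ sq*sp := by
    nlinarith [mul_nonneg (by linarith : (0:ℝ) ≤ a1*A - sq) (by linarith : (0:ℝ) ≤ a1*A - sp),
      mul_nonneg (by linarith : (0:ℝ) ≤ a1*A + sq) (by linarith : (0:ℝ) ≤ a1*A + sp)]
  nlinarith [hT1, hT2, hT3, hT4]


/-- With `c = √((f(x) − g(y))² + |x − y|²)`, `g(y) > f(x)`,
`u = ((f(x) − g(y))∇g(y) + x − y)/c`, `v = ((g(y) − f(x))∇f(x) + y − x)/c`, and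
constants `α₁, α₂ > 0` with `|(x − y)·∇g(y)| ≤ α₁(g(y) − f(x))`,
`|(x − y)·∇f(x)| ≤ α₁(g(y) − f(x))` and `|∇f(x)| + |∇g(y)| ≤ α₂`, one has
`(1 + ∇g·∇f)(1 + u·v) − (u·∇g)(∇f·v) ≥ ((g − f)²/c²)(1 − α₁(2 + α₂² + α₁))`. -/
theorem key_lower_bound_C3 {n : ℕ}
    (f g : EuclideanSpace ℝ (Fin n) → ℝ)
    (x y : EuclideanSpace ℝ (Fin n))
    (hf : ContDiffAt ℝ 1 f x) (hg : ContDiffAt ℝ 1 g y)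
    (hfg : f x < g y)
    (α₁ α₂ : ℝ) (hα₁ : 0 < α₁) (hα₂ : 0 < α₂)
    (h₁ : |⟪x - y, gradient g y⟫| ≤ α₁ * (g y - f x))
    (h₂ : |⟪x - y, gradient f x⟫| ≤ α₁ * (g y - f x))
    (h₃ : ‖gradient f x‖ + ‖gradient g y‖ ≤ α₂) :
    (1 + ⟪gradient g y, gradient f x⟫) *
      (1 + ⟪(Real.sqrt ((f x - g y) ^ 2 + ‖x - y‖ ^ 2))⁻¹ •
              ((f x - g y) • gradient g y + (x - y)),
            (Real.sqrt ((f x - g y) ^ 2 + ‖x - y‖ ^ 2))⁻¹ •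
              ((g y - f x) • gradient f x + (y - x))⟫)
    - ⟪(Real.sqrt ((f x - g y) ^ 2 + ‖x - y‖ ^ 2))⁻¹ •
          ((f x - g y) • gradient g y + (x - y)), gradient g y⟫ *
      ⟪gradient f x, (Real.sqrt ((f x - g y) ^ 2 + ‖x - y‖ ^ 2))⁻¹ •
          ((g y - f x) • gradient f x + (y - x))⟫
    ≥ ((g y - f x) ^ 2 / (Real.sqrt ((f x - g y) ^ 2 + ‖x - y‖ ^ 2)) ^ 2) *
        (1 - α₁ * (2 + α₂ ^ 2 + α₁)) := by
  have hyx : y - x = -(x - y) := by abel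
  rw [hyx]
  set p := gradient f x with hp
  set q := gradient g y with hq
  set d := x - y with hd
  set A := g y - f x with hA
  have hApos : 0 < A := sub_pos.mpr hfg
  have hfxg : f x - g y = -A := by rw [hA]; ring
  rw [hfxg]
  have hc2pos : (0:ℝ) < (-A)^2 + ‖d‖^2 := by
    have := pow_pos hApos 2
    nlinarith [sq_nonneg ‖d‖]
  set c := Real.sqrt ((-A)^2 + ‖d‖^2) with hc
  have hcpos : 0 < c := Real.sqrt_pos.mpr hc2pos
  have hcsq : c^2 = A^2 + ‖d‖^2 := by
    rw [hc, Real.sq_sqrt hc2pos.le]; ring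
  simp only [real_inner_smul_left, real_inner_smul_right, inner_add_left,
    inner_add_right, inner_neg_left, inner_neg_right, real_inner_self_eq_norm_sq]
  rw [real_inner_comm q d, real_inner_comm p d]
  set Q := ⟪q, p⟫ with hQd
  set sq := ⟪d, q⟫ with hsq
  set sp := ⟪d, p⟫ with hsp
  have e1 : ⟪p, d⟫ = sp := by rw [hsp]; exact (real_inner_comm d p)
  have e2 : ⟪q, d⟫ = sq := by rw [hsq]; exact (real_inner_comm d q)
  rw [e1, e2]
  have hnp := norm_nonneg p
  have hnq := norm_nonneg q
  have hQ : |Q| ≤ ‖q‖ * ‖p‖ := abs_real_inner_le_norm q p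
  clear_value A c Q sq sp
  clear hf hg hfg hfxg hc hQd hsq hsp hd hp hq hA hyx
  clear_value d p q
  rw [ge_iff_le, div_mul_eq_mul_div, div_le_iff₀ (by positivity)]
  have hP := scalar_key A ‖p‖ ‖q‖ Q sq sp α₁ α₂ hApos hQ h₁ h₂ h₃ hnp hnq hα₁
  have hX : ((1 + Q) * (1 + c⁻¹ * (A * (c⁻¹ * (-A * Q + sp)) + -(c⁻¹ * (-A * sq + ‖d‖ ^ 2)))) -
      c⁻¹ * (-A * ‖q‖ ^ 2 + sq) * (c⁻¹ * (A * ‖p‖ ^ 2 + -sp))) * c ^ 2 =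
      (1 + Q) * (A ^ 2 + ‖d‖ ^ 2) + (1 + Q) * (-(A^2*Q) + A*(sq+sp) - ‖d‖ ^ 2)
        - (-(A*‖q‖^2) + sq) * (A*‖p‖^2 - sp) := by
    have hcne : c ≠ 0 := hcpos.ne'
    field_simp
    linear_combination (1 + Q) * hcsq
  nlinarith [hP, hX]
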